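/- Let s be a real number with s ≥ 1. Then for all z1, z2 ∈ ℝ one has | |z1|^(s−1)·z1 − |z2|^(s−1)·z2 | ≤ s·(|z1| + |z2|)^(s−1)·|z1 − z2|. -/

import Mathlib

open Real

lemma hasDerivAt_odd_rpow {s : ℝ} (hs : 1 < s) (x : ℝ) :
    HasDerivAt (fun z : ℝ => |z| ^ (s - 1) * z) (s * |x| ^ (s - 1)) x := by
  rcases eq_or_ne x 0 with rfl | hx
  · have h0 : s * |(0 : ℝ)| ^ (s - 1) = 0 := by
      rw [abs_zero, Real.zero_rpow (by linarith), mul_zero]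
    rw [h0, hasDerivAt_iff_tendsto_slope]
    have hcont : Filter.Tendsto (fun z : ℝ => |z| ^ (s - 1)) (nhds 0) (nhds 0) := by
      have : ContinuousAt (fun z : ℝ => |z| ^ (s - 1)) 0 := by
        apply ContinuousAt.rpow_const (continuous_abs.continuousAt)
        right; linarith
      simpa [Real.zero_rpow (show s - 1 ≠ 0 by linarith)] using this.tendsto
    refine (hcont.mono_left nhdsWithin_le_nhds).congr' ?_
    filter_upwards [self_mem_nhdsWithin] with z hz
    simp only [Set.mem_compl_iff, Set.mem_singleton_iff] at hz
    rw [slope_def_field]; field_simp; simp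
  · have habs := hasDerivAt_abs hx
    have h1 := (habs.rpow_const (p := s - 1) (Or.inl (abs_ne_zero.2 hx))).mul (hasDerivAt_id x)
    refine h1.congr_deriv (Eq.symm ?_)
    have hsign : (SignType.sign x : ℝ) * x = |x| := by
      rcases hx.lt_or_gt with h | h
      · simp [h, abs_of_neg h]
      · simp [h, abs_of_pos h]
    have habspos : (0 : ℝ) < |x| := abs_pos.2 hx
    have key : |x| ^ (s - 1 - 1) * |x| = |x| ^ (s - 1) := by
      rw [← Real.rpow_add_one habspos.ne' (s - 1 - 1)]
      ring_nf
    calc s * |x| ^ (s - 1) = (s - 1) * |x| ^ (s - 1) + |x| ^ (s - 1) := by ring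
      _ = (SignType.sign x : ℝ) * (s - 1) * |x| ^ (s - 1 - 1) * x + |x| ^ (s - 1) * 1 := by
          rw [mul_one]
          congr 1
          rw [show (SignType.sign x : ℝ) * (s - 1) * |x| ^ (s - 1 - 1) * x
              = (s - 1) * (|x| ^ (s - 1 - 1) * ((SignType.sign x : ℝ) * x)) by ring,
            hsign, key]
      _ = _ := by simp only [id_eq]

theorem odd_power_mvt_estimate
    (s : ℝ) (hs : 1 ≤ s) (z1 z2 : ℝ) :
    |(|z1| ^ (s - 1) * z1 - |z2| ^ (s - 1) * z2)| ≤
      s * (|z1| + |z2|) ^ (s - 1) * |z1 - z2| := by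
  rcases eq_or_lt_of_le hs with rfl | hs1
  · simp [Real.rpow_zero]
  · set C := s * (|z1| + |z2|) ^ (s - 1) with hC
    have hconv : Convex ℝ (segment ℝ z2 z1) := convex_segment z2 z1
    have hderiv : ∀ u ∈ segment ℝ z2 z1,
        HasDerivWithinAt (fun z : ℝ => |z| ^ (s - 1) * z) (s * |u| ^ (s - 1))
          (segment ℝ z2 z1) u :=
      fun u _ => (hasDerivAt_odd_rpow hs1 u).hasDerivWithinAt
    have hbound : ∀ u ∈ segment ℝ z2 z1, ‖s * |u| ^ (s - 1)‖ ≤ C := by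
      intro u hu
      have habs_le : |u| ≤ |z1| + |z2| := by
        rcases hu with ⟨a, b, ha, hb, hab, rfl⟩
        calc |a • z2 + b • z1| ≤ a * |z2| + b * |z1| := by
              refine (abs_add_le _ _).trans ?_
              simp [abs_mul, abs_of_nonneg ha, abs_of_nonneg hb, smul_eq_mul]
          _ ≤ |z1| + |z2| := by nlinarith [abs_nonneg z1, abs_nonneg z2]
      have h1 : |u| ^ (s - 1) ≤ (|z1| + |z2|) ^ (s - 1) :=
        Real.rpow_le_rpow (abs_nonneg u) habs_le (by linarith)
      have hs0 : (0 : ℝ) < s := by linarith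
      rw [Real.norm_eq_abs, abs_mul, abs_of_pos hs0, abs_of_nonneg
        (Real.rpow_nonneg (abs_nonneg u) _)]
      exact mul_le_mul_of_nonneg_left h1 hs0.le
    have := hconv.norm_image_sub_le_of_norm_hasDerivWithin_le hderiv hbound
      (right_mem_segment ℝ z2 z1) (left_mem_segment ℝ z2 z1)
    simpa [Real.norm_eq_abs, abs_sub_comm] using this
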